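/- arXiv:2101.07188 — 6 statements merged into one kernel-verified Lean document; each statement's English description precedes it below -/
import Mathlib

section
/- Let α be a type with at least two distinct elements and let F = FreeGroup α be the free group on α (so F is a non-abelian free group). Let G be a normal subgroup of F with G ≠ ⊥, and let φ : F ≃* F be a group automorphism such that φ x = x for every x ∈ G. Then φ is the identity automorphism of F. -/
open FreeGroup Subgroup

private lemma FG.noncomm {γ : Type*} {a b : γ} (hab : a ≠ b) :
    ¬ ((of a : FreeGroup γ) * of b = of b * of a) := by
  classical
  intro h
  have := congrArg (FreeGroup.lift
    (fun x : γ => if x = a then Equiv.swap (0 : Fin 3) 1 else Equiv.swap 1 2)) h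
  simp [hab, hab.symm] at this
  revert this; decide

private lemma FG.L0 {γ : Type*} (a : γ) (k : ℤ) (h : (of a : FreeGroup γ) ^ k = 1) :
    k = 0 := by
  have := congrArg (FreeGroup.lift (fun _ : γ => Multiplicative.ofAdd (1 : ℤ))) h
  simp [← ofAdd_zsmul] at this
  simpa using this

private lemma FG.H1 {γ : Type*} {a b : γ} (hab : a ≠ b) {k l : ℤ}
    (h : (of a : FreeGroup γ) ^ k = (of b) ^ l) : k = 0 ∧ l = 0 := by
  classical
  have h1 := congrArg (FreeGroup.lift
    (fun x : γ => if x = a then Multiplicative.ofAdd (1 : ℤ) else 1)) h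
  have h2 := congrArg (FreeGroup.lift
    (fun x : γ => if x = b then Multiplicative.ofAdd (1 : ℤ) else 1)) h
  simp [hab, hab.symm, ← ofAdd_zsmul] at h1 h2
  exact ⟨by simpa using h1, by simpa using h2.symm⟩

private lemma FG.of_ne_one {γ : Type*} (a : γ) : (of a : FreeGroup γ) ≠ 1 := by
  intro h
  have : (of a : FreeGroup γ) ^ (1 : ℤ) = 1 := by simpa using h
  exact one_ne_zero (FG.L0 a 1 this)

private lemma FG.subsing_comm {γ : Type*} [Subsingleton γ] (x y : FreeGroup γ) :
    x * y = y * x := by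
  have : ∀ x y : FreeGroup γ, Commute x y := by
    intro x y
    induction x using FreeGroup.induction_on with
    | C1 => exact Commute.one_left y
    | of a =>
      induction y using FreeGroup.induction_on with
      | C1 => exact Commute.one_right _
      | of b => rw [Subsingleton.elim a b]
      | inv_of b h => exact h.inv_right
      | mul u v hu hv => exact hu.mul_right hv
    | inv_of a h => exact h.inv_left
    | mul u v hu hv => exact hu.mul_left hv
  exact (this x y).eq

private lemma FG.subsing_pow {γ : Type*} [Subsingleton γ] (g : γ) (x : FreeGroup γ) :
    ∃ n : ℤ, x = (of g) ^ n := by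
  induction x using FreeGroup.induction_on with
  | C1 => exact ⟨0, by simp⟩
  | of a => exact ⟨1, by rw [Subsingleton.elim a g, zpow_one]⟩
  | inv_of a h => obtain ⟨n, hn⟩ := h; exact ⟨-n, by rw [hn, zpow_neg]⟩
  | mul u v hu hv =>
    obtain ⟨n, hn⟩ := hu; obtain ⟨m, hm⟩ := hv
    exact ⟨n + m, by rw [hn, hm, zpow_add]⟩

private lemma FG.empty_triv {γ : Type*} [IsEmpty γ] (x : FreeGroup γ) : x = 1 := by
  induction x using FreeGroup.induction_on with
  | C1 => rfl
  | of a => exact isEmptyElim a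
  | inv_of a h => exact isEmptyElim a
  | mul u v hu hv => rw [hu, hv, one_mul]

/-- An abelian subgroup of a free group is trivial or contained in the powers of
one of its elements, which has infinite order. -/
private lemma FG.key {α : Type*} (H : Subgroup (FreeGroup α))
    (hab : ∀ x ∈ H, ∀ y ∈ H, x * y = y * x) :
    H = ⊥ ∨ ∃ z : FreeGroup α, z ∈ H ∧ H ≤ zpowers z ∧ ∀ k : ℤ, z ^ k = 1 → k = 0 := by
  set γ := IsFreeGroup.Generators H with hγ
  let e : H ≃* FreeGroup γ := IsFreeGroup.toFreeGroup H
  have hsub : Subsingleton γ := by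
    by_contra hns
    obtain ⟨a, b, hne⟩ := not_subsingleton_iff_nontrivial.mp hns |>.exists_pair_ne
    apply FG.noncomm hne
    have h1 : (e.symm (of a) : FreeGroup α) * (e.symm (of b) : FreeGroup α)
        = (e.symm (of b) : FreeGroup α) * (e.symm (of a) : FreeGroup α) :=
      hab _ (e.symm (of a)).2 _ (e.symm (of b)).2
    have h2 : e.symm (of a) * e.symm (of b) = e.symm (of b) * e.symm (of a) :=
      Subtype.ext h1
    calc of a * of b = e (e.symm (of a) * e.symm (of b)) := by simp
      _ = e (e.symm (of b) * e.symm (of a)) := by rw [h2]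
      _ = of b * of a := by simp
  rcases isEmpty_or_nonempty γ with hemp | ⟨⟨g⟩⟩
  · left
    ext x
    simp only [Subgroup.mem_bot]
    constructor
    · intro hx
      have : e ⟨x, hx⟩ = e 1 := by rw [_root_.map_one]; exact FG.empty_triv _
      exact congrArg Subtype.val (e.injective this)
    · rintro rfl; exact H.one_mem
  · right
    refine ⟨(e.symm (of g) : FreeGroup α), (e.symm (of g)).2, ?_, ?_⟩
    · intro x hx
      obtain ⟨n, hn⟩ := FG.subsing_pow g (e ⟨x, hx⟩)
      refine mem_zpowers_iff.mpr ⟨n, ?_⟩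
      have : e.symm (e ⟨x, hx⟩) = e.symm ((of g) ^ n) := by rw [hn]
      rw [e.symm_apply_apply, map_zpow] at this
      simpa using (congrArg Subtype.val this).symm
    · intro k hk
      have h1 : ((e.symm (of g)) ^ k : H) = (1 : H) := Subtype.ext (by simpa using hk)
      have := congrArg e h1
      rw [map_zpow, _root_.map_one, e.apply_symm_apply] at this
      exact FG.L0 g k this

/-- The subgroup generated by two commuting elements is abelian. -/
private lemma FG.closure_pair_comm {α : Type*} {u v : FreeGroup α} (huv : u * v = v * u) :
    ∀ x ∈ closure {u, v}, ∀ y ∈ closure {u, v}, x * y = y * x := by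
  intro x hx y hy
  have hyc : ∀ w ∈ ({u, v} : Set (FreeGroup α)), w * y = y * w := by
    have : closure {u, v} ≤ centralizer {u, v} := by
      apply closure_le _ |>.mpr
      rintro w (rfl | rfl)
      · exact mem_centralizer_iff.mpr (by rintro g (rfl | rfl) <;> simp [huv])
      · exact mem_centralizer_iff.mpr (by rintro g (rfl | rfl) <;> simp [huv])
    exact mem_centralizer_iff.mp (this hy)
  have : closure {u, v} ≤ centralizer {y} := by
    apply closure_le _ |>.mpr
    intro w hw
    exact mem_centralizer_iff.mpr (by rintro g rfl; exact (hyc w hw).symm ▸ (hyc w hw))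
  exact (mem_centralizer_iff.mp (this hx) y rfl).symm

/-- Two commuting elements of a free group are powers of a common
infinite-order element. -/
private lemma FG.comm_cyclic {α : Type*} {u v : FreeGroup α} (hu : u ≠ 1)
    (huv : u * v = v * u) :
    ∃ (z : FreeGroup α) (m n : ℤ), u = z ^ m ∧ v = z ^ n ∧ m ≠ 0 ∧
      ∀ k : ℤ, z ^ k = 1 → k = 0 := by
  have humem : u ∈ closure {u, v} := subset_closure (by simp)
  have hvmem : v ∈ closure {u, v} := subset_closure (by simp)
  rcases FG.key _ (FG.closure_pair_comm huv) with hbot | ⟨z, _, hle, hord⟩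
  · exact absurd ((Subgroup.mem_bot).mp (hbot ▸ humem)) hu
  · obtain ⟨m, hm⟩ := mem_zpowers_iff.mp (hle humem)
    obtain ⟨n, hn⟩ := mem_zpowers_iff.mp (hle hvmem)
    refine ⟨z, m, n, hm.symm, hn.symm, ?_, hord⟩
    rintro rfl
    simp at hm
    exact hu hm.symm

/-- The centralizer of a nontrivial element of a free group is abelian. -/
private lemma FG.centralizer_comm {α : Type*} {h : FreeGroup α} (hh : h ≠ 1) :
    ∀ x ∈ centralizer {h}, ∀ y ∈ centralizer {h}, x * y = y * x := by
  set C := centralizer ({h} : Set (FreeGroup α)) with hC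
  set γ := IsFreeGroup.Generators C with hγ
  let e : C ≃* FreeGroup γ := IsFreeGroup.toFreeGroup C
  have hhC : h ∈ C := mem_centralizer_iff.mpr (by rintro g rfl; rfl)
  have hsub : Subsingleton γ := by
    by_contra hns
    obtain ⟨a, b, hne⟩ := not_subsingleton_iff_nontrivial.mp hns |>.exists_pair_ne
    set h' : FreeGroup γ := e ⟨h, hhC⟩ with hh'
    have hcen : ∀ w : FreeGroup γ, h' * w = w * h' := by
      intro w
      have h1 : h * (e.symm w : FreeGroup α) = (e.symm w : FreeGroup α) * h :=
        mem_centralizer_iff.mp (e.symm w).2 h rfl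
      have h2 : (⟨h, hhC⟩ : C) * e.symm w = e.symm w * ⟨h, hhC⟩ := Subtype.ext h1
      calc h' * w = e (⟨h, hhC⟩ * e.symm w) := by simp [hh']
        _ = e (e.symm w * ⟨h, hhC⟩) := by rw [h2]
        _ = w * h' := by simp [hh']
    have hne1 : h' ≠ 1 := by
      intro hcon
      apply hh
      have : e ⟨h, hhC⟩ = e 1 := by rw [_root_.map_one]; exact hcon
      exact congrArg Subtype.val (e.injective this)
    obtain ⟨z, m, p, hzm, hzp, hm0, -⟩ := FG.comm_cyclic hne1 (hcen (of a))
    obtain ⟨w, m', p', hwm, hwp, hm'0, -⟩ := FG.comm_cyclic hne1 (hcen (of b))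
    have hp0 : p ≠ 0 := by rintro rfl; exact FG.of_ne_one a (by simpa using hzp)
    have hp'0 : p' ≠ 0 := by rintro rfl; exact FG.of_ne_one b (by simpa using hwp)
    -- (of a)^m = h'^p  and  (of b)^{m'} = h'^{p'}
    have e1 : (of a : FreeGroup γ) ^ m = h' ^ p := by
      rw [hzp, hzm, ← zpow_mul, ← zpow_mul, mul_comm]
    have e2 : (of b : FreeGroup γ) ^ m' = h' ^ p' := by
      rw [hwp, hwm, ← zpow_mul, ← zpow_mul, mul_comm]
    have e3 : (of a : FreeGroup γ) ^ (m * p') = (of b) ^ (m' * p) := by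
      rw [zpow_mul, zpow_mul, e1, e2, ← zpow_mul, ← zpow_mul, mul_comm]
    exact (mul_ne_zero hm0 hp'0) (FG.H1 hne e3).1
  intro x hx y hy
  have h2 : e ⟨x, hx⟩ * e ⟨y, hy⟩ = e ⟨y, hy⟩ * e ⟨x, hx⟩ := FG.subsing_comm _ _
  rw [← _root_.map_mul, ← _root_.map_mul] at h2
  exact congrArg Subtype.val (e.injective h2)

/-- Centralizer monotonicity for commuting nontrivial elements. -/
private lemma FG.cent_le {α : Type*} {p q : FreeGroup α} (hp : p ≠ 1)
    (hpq : p * q = q * p) : centralizer {p} ≤ centralizer {q} := by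
  intro v hv
  have hq : q ∈ centralizer ({p} : Set (FreeGroup α)) :=
    mem_centralizer_iff.mpr (by rintro g rfl; exact hpq)
  refine mem_centralizer_iff.mpr ?_
  rintro g rfl
  exact (FG.centralizer_comm hp v hv g hq).symm

/-- An automorphism of a non-abelian free group fixing a nontrivial normal
subgroup pointwise is the identity. -/
theorem stmt_0 {α : Type*} (hα : ∃ a b : α, a ≠ b)
    (G : Subgroup (FreeGroup α)) [G.Normal] (hG : G ≠ ⊥)
    (φ : FreeGroup α ≃* FreeGroup α) (hφ : ∀ x ∈ G, φ x = x) :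
    φ = MulEquiv.refl (FreeGroup α) := by
  obtain ⟨a, b, hne⟩ := hα
  have hNormal : G.Normal := inferInstance
  apply MulEquiv.ext
  intro x
  show φ x = x
  by_contra hfx
  set c := x⁻¹ * φ x with hcdef
  have hc1 : c ≠ 1 := fun h => hfx (inv_mul_eq_one.mp h).symm
  have hccomm : ∀ g ∈ G, c * g = g * c := by
    intro g hg
    have h1 : φ (x * g * x⁻¹) = x * g * x⁻¹ := hφ _ (hNormal.conj_mem g hg x)
    have h2 : φ x * g * (φ x)⁻¹ = x * g * x⁻¹ := by
      rw [_root_.map_mul, _root_.map_mul, _root_.map_inv, hφ g hg] at h1; exact h1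
    calc c * g = x⁻¹ * (φ x * g * (φ x)⁻¹) * φ x := by rw [hcdef]; group
      _ = x⁻¹ * (x * g * x⁻¹) * φ x := by rw [h2]
      _ = g * c := by rw [hcdef]; group
  obtain ⟨g₀H, hg₀ne⟩ := ne_bot_iff_exists_ne_one.mp hG
  have hg₀G : (g₀H : FreeGroup α) ∈ G := g₀H.2
  have hg₀1 : (g₀H : FreeGroup α) ≠ 1 := fun h => hg₀ne (Subtype.ext h)
  obtain ⟨z, m, n, hcm, hgn, hm0, hord⟩ := FG.comm_cyclic hc1 (hccomm _ hg₀G)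
  have hn0 : n ≠ 0 := by rintro rfl; simp at hgn; exact hg₀ne hgn
  set h := z ^ (m * n) with hhdef
  have hhc : h = c ^ n := by rw [hcm, ← zpow_mul]
  have hhg : h = (g₀H : FreeGroup α) ^ m := by rw [hgn, ← zpow_mul, mul_comm]
  have hhG : h ∈ G := hhg ▸ G.zpow_mem hg₀G m
  have hh1 : h ≠ 1 := fun hcon => (mul_ne_zero hm0 hn0) (hord _ hcon)
  have hhcomm : ∀ g ∈ G, h * g = g * h := by
    intro g hg
    have hcg : Commute c g := hccomm g hg
    rw [hhc]
    exact (hcg.zpow_left n).eq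
  -- conjugates of h lie in the centralizer of h
  have hconjC : ∀ u : FreeGroup α, u * h * u⁻¹ ∈ centralizer {h} :=
    fun u => mem_centralizer_iff.mpr
      (by rintro g rfl; exact hhcomm _ (hNormal.conj_mem h hhG u))
  -- the centralizer of h is normal
  have hCnormal : ∀ u : FreeGroup α, ∀ v ∈ centralizer ({h} : Set (FreeGroup α)),
      u * v * u⁻¹ ∈ centralizer ({h} : Set (FreeGroup α)) := by
    intro u v hv
    have hk1 : u * h * u⁻¹ ≠ 1 := by
      intro hcon
      apply hh1
      have := congrArg (fun t => u⁻¹ * t * u) hcon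
      simpa [mul_assoc] using this
    have hhk : h * (u * h * u⁻¹) = (u * h * u⁻¹) * h :=
      hhcomm _ (hNormal.conj_mem h hhG u)
    have le2 : centralizer {u * h * u⁻¹} ≤ centralizer ({h} : Set (FreeGroup α)) :=
      FG.cent_le hk1 hhk.symm
    apply le2
    refine mem_centralizer_iff.mpr ?_
    rintro g rfl
    have hv' : h * v = v * h := mem_centralizer_iff.mp hv h rfl
    calc u * h * u⁻¹ * (u * v * u⁻¹) = u * (h * v) * u⁻¹ := by group
      _ = u * (v * h) * u⁻¹ := by rw [hv']
      _ = u * v * u⁻¹ * (u * h * u⁻¹) := by group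
  -- the centralizer of h is abelian, hence contained in ⟨w⟩ for some w of infinite order
  have hCcomm := FG.centralizer_comm hh1
  have hhCmem : h ∈ centralizer ({h} : Set (FreeGroup α)) :=
    mem_centralizer_iff.mpr (by rintro g rfl; rfl)
  rcases FG.key _ hCcomm with hbot | ⟨w, hwC, hle, hword⟩
  · exact hh1 (Subgroup.mem_bot.mp (hbot ▸ hhCmem))
  have hw1 : w ≠ 1 := fun hcon => one_ne_zero (hword 1 (by simpa using hcon))
  -- conjugation sends w to w or w⁻¹
  have hsign : ∀ u : FreeGroup α, u * w * u⁻¹ = w ∨ u * w * u⁻¹ = w⁻¹ := by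
    intro u
    obtain ⟨k, hk⟩ := mem_zpowers_iff.mp (hle (hCnormal u w hwC))
    obtain ⟨l, hl⟩ := mem_zpowers_iff.mp (hle (hCnormal u⁻¹ w hwC))
    rw [inv_inv] at hl
    have h1 : w = w ^ (l * k) := by
      calc w = u⁻¹ * (u * w * u⁻¹) * u := by group
        _ = u⁻¹ * w ^ k * u := by rw [hk]
        _ = (u⁻¹ * w * u) ^ k := by
            rw [show u⁻¹ * w * u = u⁻¹ * w * u⁻¹⁻¹ by rw [inv_inv], conj_zpow, inv_inv]
        _ = (w ^ l) ^ k := by rw [hl]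
        _ = w ^ (l * k) := by rw [← zpow_mul]
    have h2 : w ^ (l * k - 1) = 1 := by
      rw [zpow_sub, zpow_one, ← h1, mul_inv_cancel]
    have h3 : l * k = 1 := by have := hword _ h2; omega
    have h4 : k = 1 ∨ k = -1 :=
      Int.isUnit_iff.mp (IsUnit.of_mul_eq_one (a := k) l (by rw [mul_comm]; exact h3))
    rcases h4 with rfl | rfl
    · left; rw [← hk, zpow_one]
    · right; rw [← hk]; simp
  -- squares centralize w
  have hsq : ∀ u : FreeGroup α, (u * u) * w * (u * u)⁻¹ = w := by
    intro u
    rcases hsign u with hs | hs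
    · calc (u * u) * w * (u * u)⁻¹ = u * (u * w * u⁻¹) * u⁻¹ := by group
        _ = w := by rw [hs]; exact hs
    · calc (u * u) * w * (u * u)⁻¹ = u * (u * w * u⁻¹) * u⁻¹ := by group
        _ = u * w⁻¹ * u⁻¹ := by rw [hs]
        _ = (u * w * u⁻¹)⁻¹ := by group
        _ = w⁻¹⁻¹ := by rw [hs]
        _ = w := inv_inv w
  have hmemsq : ∀ u : FreeGroup α, u * u ∈ centralizer ({w} : Set (FreeGroup α)) := by
    intro u
    refine mem_centralizer_iff.mpr ?_
    intro g hg'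
    rw [Set.mem_singleton_iff] at hg'
    rw [hg']
    have := hsq u
    calc w * (u * u) = ((u * u) * w * (u * u)⁻¹) * (u * u) := by rw [this]
      _ = (u * u) * w := by group
  have ea : (of a * of a : FreeGroup α) = (of a) ^ (2 : ℤ) := (zpow_two _).symm
  have eb : (of b * of b : FreeGroup α) = (of b) ^ (2 : ℤ) := (zpow_two _).symm
  have ha1 : (of a : FreeGroup α) * of a ≠ 1 := by
    intro hcon
    rw [ea] at hcon
    have := FG.L0 a 2 hcon
    omega
  have hb1 : (of b : FreeGroup α) * of b ≠ 1 := by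
    intro hcon
    rw [eb] at hcon
    have := FG.L0 b 2 hcon
    omega
  have hcommab : (of a * of a : FreeGroup α) * (of b * of b) = (of b * of b) * (of a * of a) :=
    FG.centralizer_comm hw1 _ (hmemsq (of a)) _ (hmemsq (of b))
  obtain ⟨z', m', n', hza, hzb, hm'0, -⟩ := FG.comm_cyclic ha1 hcommab
  have hn'0 : n' ≠ 0 := by rintro rfl; simp at hzb; exact hb1 hzb
  have key2 : (of a * of a : FreeGroup α) ^ n' = (of b * of b) ^ m' := by
    rw [hza, hzb, ← zpow_mul, ← zpow_mul, mul_comm]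
  have e1 : (of a : FreeGroup α) ^ ((2 : ℤ) * n') = (of b) ^ ((2 : ℤ) * m') := by
    rw [zpow_mul, zpow_mul, ← ea, ← eb]
    exact key2
  have h20 := (FG.H1 hne e1).1
  have : m' * n' ≠ 0 := mul_ne_zero hm'0 hn'0
  omega
end

section
/- Let α be a type withderive at least two distinct elements and let F = FreeGroup α. If G is a normal subgroup of F with G ≠ ⊥, then there exist elements x, y ∈ G such that the centralizer of x in F and the centralizer of y in F intersect trivially, i.e., Subgroup.centralizer {x} ⊓ Subgroup.centralizer {y} = ⊥. -/
open FreeGroup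

namespace Stmt3Aux

variable {α : Type*}

/-- The exponent-sum homomorphism counting occurrences of the letter `a`. -/
noncomputable def expSum [DecidableEq α] (a : α) : FreeGroup α →* Multiplicative ℤ :=
  FreeGroup.lift fun s => Multiplicative.ofAdd (if s = a then (1 : ℤ) else 0)

theorem expSum_of_self [DecidableEq α] (a : α) :
    (expSum a (of a)).toAdd = 1 := by simp [expSum]

theorem expSum_of_ne [DecidableEq α] {a b : α} (h : b ≠ a) :
    (expSum a (of b)).toAdd = 0 := by simp [expSum, h]

theorem expSum_eq [DecidableEq α] (a : α) {x c : FreeGroup α} {n : ℤ} (h : x = c ^ n) :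
    (expSum a x).toAdd = n * (expSum a c).toAdd := by
  subst h; rw [_root_.map_zpow, toAdd_zpow, smul_eq_mul]

/-- Two generators of a free group commute only if they are equal. -/
theorem eq_of_of_mul_of_eq {γ : Type*} {a b : γ}
    (h : of a * of b = of b * of a) : a = b := by
  classical
  by_contra hne
  let φ : FreeGroup γ →* Equiv.Perm (Fin 3) :=
    FreeGroup.lift fun s =>
      if s = a then Equiv.swap 0 1 else if s = b then Equiv.swap 1 2 else 1
  have hx : φ (of a) = Equiv.swap 0 1 := by simp [φ]
  have hy : φ (of b) = Equiv.swap 1 2 := by simp [φ, Ne.symm hne]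
  have h2 := congrArg φ h
  rw [_root_.map_mul, _root_.map_mul, hx, hy] at h2
  exact absurd h2 (by decide)

theorem closure_comm {G : Type*} [Group G] {s : Set G}
    (hs : ∀ x ∈ s, ∀ y ∈ s, x * y = y * x) :
    ∀ u ∈ Subgroup.closure s, ∀ v ∈ Subgroup.closure s, u * v = v * u := by
  have step1 : ∀ x ∈ s, ∀ v ∈ Subgroup.closure s, x * v = v * x := by
    intro x hx v hv
    have hle : Subgroup.closure s ≤ Subgroup.centralizer {x} := by
      refine (Subgroup.closure_le _).mpr ?_
      intro y hy
      rw [SetLike.mem_coe, Subgroup.mem_centralizer_iff]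
      intro h hh
      rw [Set.mem_singleton_iff] at hh; subst hh
      exact hs _ hx _ hy
    have := hle hv
    rw [Subgroup.mem_centralizer_iff] at this
    exact this x rfl
  intro u hu v hv
  have hle : Subgroup.closure s ≤ Subgroup.centralizer {u} := by
    refine (Subgroup.closure_le _).mpr ?_
    intro y hy
    rw [SetLike.mem_coe, Subgroup.mem_centralizer_iff]
    intro h hh
    rw [Set.mem_singleton_iff] at hh; subst hh
    exact (step1 _ hy _ hu).symm
  have := hle hv
  rw [Subgroup.mem_centralizer_iff] at this
  exact this u rfl

theorem all_eq_one {γ : Type*} (hE : IsEmpty γ) (w : FreeGroup γ) : w = 1 := by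
  induction w using FreeGroup.induction_on with
  | C1 => rfl
  | of x => exact hE.elim x
  | inv_of x ih => rw [ih, inv_one]
  | mul x y ihx ihy => rw [ihx, ihy, one_mul]

theorem exists_zpow {γ : Type*} (g₀ : γ) (hss : ∀ t : γ, t = g₀) (w : FreeGroup γ) :
    ∃ n : ℤ, w = of g₀ ^ n := by
  induction w using FreeGroup.induction_on with
  | C1 => exact ⟨0, by simp⟩
  | of x => exact ⟨1, by rw [hss x, zpow_one]⟩
  | inv_of x ih =>
    obtain ⟨n, hn⟩ := ih
    exact ⟨-n, by rw [hn, zpow_neg]⟩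
  | mul x y ihx ihy =>
    obtain ⟨n, hn⟩ := ihx
    obtain ⟨m, hm⟩ := ihy
    exact ⟨n + m, by rw [hn, hm, zpow_add]⟩

/-- An abelian subgroup of a free group is cyclic (with a torsion-free generator). -/
theorem cyclic_of_comm (H : Subgroup (FreeGroup α))
    (hcomm : ∀ u ∈ H, ∀ v ∈ H, u * v = v * u) :
    ∃ c ∈ H, (∀ x ∈ H, ∃ n : ℤ, x = c ^ n) ∧
      (c = 1 ∨ ∀ m : ℤ, c ^ m = 1 → m = 0) := by
  classical
  let e : H ≃* FreeGroup (IsFreeGroup.Generators H) := IsFreeGroup.toFreeGroup ↥H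
  have hss : ∀ a b : IsFreeGroup.Generators H, a = b := by
    intro a b
    apply eq_of_of_mul_of_eq
    have h1 : e.symm (of a) * e.symm (of b) = e.symm (of b) * e.symm (of a) :=
      Subtype.ext (hcomm _ (e.symm (of a)).2 _ (e.symm (of b)).2)
    have h2 := congrArg e h1
    rw [_root_.map_mul, _root_.map_mul, e.apply_symm_apply, e.apply_symm_apply] at h2
    exact h2
  rcases isEmpty_or_nonempty (IsFreeGroup.Generators H) with hE | hN
  · refine ⟨1, H.one_mem, ?_, Or.inl rfl⟩
    intro x hx
    refine ⟨0, ?_⟩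
    have h1 : e ⟨x, hx⟩ = 1 := all_eq_one hE _
    have h2 : (⟨x, hx⟩ : H) = 1 := by
      apply e.injective; rw [h1, _root_.map_one]
    simpa using congrArg Subtype.val h2
  · obtain ⟨g₀⟩ := hN
    refine ⟨(e.symm (of g₀) : FreeGroup α), (e.symm (of g₀)).2, ?_, Or.inr ?_⟩
    · intro x hx
      obtain ⟨n, hn⟩ := exists_zpow g₀ (fun t => hss t g₀) (e ⟨x, hx⟩)
      refine ⟨n, ?_⟩
      have h1 : (⟨x, hx⟩ : H) = e.symm (of g₀) ^ n := by
        apply e.injective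
        rw [_root_.map_zpow, e.apply_symm_apply, hn]
      have h2 := congrArg Subtype.val h1
      simpa [SubgroupClass.coe_zpow] using h2
    · intro m hm
      have h1 : ((e.symm (of g₀)) ^ m : H) = (1 : H) := by
        apply Subtype.ext
        simpa [SubgroupClass.coe_zpow] using hm
      have h2 : (of g₀ : FreeGroup (IsFreeGroup.Generators H)) ^ m = 1 := by
        have := congrArg e h1
        rwa [_root_.map_zpow, e.apply_symm_apply, _root_.map_one] at this
      have h3 := expSum_eq g₀ h2.symm
      rw [_root_.map_one] at h3
      have h4 : (0 : ℤ) = m := by simpa [expSum_of_self] using h3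
      omega

/-- Free groups are torsion-free. -/
theorem torsionfree (c : FreeGroup α) (hc : c ≠ 1) (j : ℤ) (hj : c ^ j = 1) : j = 0 := by
  have hcl : ∀ x ∈ ({c} : Set (FreeGroup α)), ∀ y ∈ ({c} : Set (FreeGroup α)), x * y = y * x := by
    intro x hx y hy
    rw [Set.mem_singleton_iff] at hx hy; subst hx; subst hy; rfl
  obtain ⟨d, _, hpow, htor⟩ := cyclic_of_comm (Subgroup.closure {c}) (closure_comm hcl)
  obtain ⟨n, hn⟩ := hpow c (Subgroup.subset_closure (Set.mem_singleton c))
  have hd1 : d ≠ 1 := by rintro rfl; rw [one_zpow] at hn; exact hc hn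
  have hn0 : n ≠ 0 := by rintro rfl; rw [zpow_zero] at hn; exact hc hn
  rcases htor with h1 | htor
  · exact absurd h1 hd1
  · rw [hn, ← zpow_mul] at hj
    have := htor (n * j) hj
    exact (mul_eq_zero.mp this).resolve_left hn0

/-- Two commuting elements of a free group are powers of a common element. -/
theorem commute_cyclic (x y : FreeGroup α) (h : x * y = y * x) :
    ∃ c : FreeGroup α, (∃ m : ℤ, x = c ^ m) ∧ ∃ n : ℤ, y = c ^ n := by
  have hcl : ∀ u ∈ ({x, y} : Set (FreeGroup α)), ∀ v ∈ ({x, y} : Set (FreeGroup α)),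
      u * v = v * u := by
    intro u hu v hv
    rcases hu with rfl | hu
    · rcases hv with rfl | hv
      · rfl
      · rw [Set.mem_singleton_iff] at hv; subst hv; exact h
    · rw [Set.mem_singleton_iff] at hu; subst hu
      rcases hv with rfl | hv
      · exact h.symm
      · rw [Set.mem_singleton_iff] at hv; subst hv; rfl
  obtain ⟨c, _, hpow, _⟩ := cyclic_of_comm (Subgroup.closure {x, y}) (closure_comm hcl)
  exact ⟨c, hpow x (Subgroup.subset_closure (by simp)),
    hpow y (Subgroup.subset_closure (by simp))⟩

/-- Anything commuting with a generator is a power of it. -/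
theorem eq_zpow_of_of_commute {a : α} {ζ : FreeGroup α} (h : ζ * of a = of a * ζ) :
    ∃ k : ℤ, ζ = of a ^ k := by
  classical
  obtain ⟨c, ⟨m, hm⟩, ⟨i, hi⟩⟩ := commute_cyclic ζ (of a) h
  have h1 : (1 : ℤ) = i * (expSum a c).toAdd := by
    have := expSum_eq a hi
    rwa [expSum_of_self] at this
  have hiu : IsUnit i := IsUnit.of_mul_eq_one _ h1.symm
  rcases Int.isUnit_iff.mp hiu with rfl | rfl
  · rw [zpow_one] at hi
    exact ⟨m, by rw [hm, ← hi]⟩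
  · rw [zpow_neg_one] at hi
    have hc : c = (of a)⁻¹ := by rw [hi, inv_inv]
    exact ⟨-m, by rw [hm, hc, inv_zpow, ← zpow_neg]⟩

/-- A word commuting with two distinct generators is trivial. -/
theorem eq_one_of_commute_two {γ : Type*} {a b : γ} (hab : a ≠ b) {ζ : FreeGroup γ}
    (ha : ζ * of a = of a * ζ) (hb : ζ * of b = of b * ζ) : ζ = 1 := by
  classical
  obtain ⟨k, hk⟩ := eq_zpow_of_of_commute ha
  obtain ⟨l, hl⟩ := eq_zpow_of_of_commute hb
  have h1 : (expSum a ζ).toAdd = k * 1 := by rw [expSum_eq a hk, expSum_of_self]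
  have h2 : (expSum a ζ).toAdd = l * 0 := by rw [expSum_eq a hl, expSum_of_ne (Ne.symm hab)]
  have hk0 : k = 0 := by rw [mul_one] at h1; rw [mul_zero] at h2; rw [← h1, h2]
  rw [hk, hk0, zpow_zero]

/-- A subgroup of a free group with a nontrivial central element is abelian. -/
theorem comm_of_central (H : Subgroup (FreeGroup α)) (z : FreeGroup α)
    (hzH : z ∈ H) (hz : z ≠ 1) (hcen : ∀ u ∈ H, z * u = u * z) :
    ∀ u ∈ H, ∀ v ∈ H, u * v = v * u := by
  classical
  let e : H ≃* FreeGroup (IsFreeGroup.Generators H) := IsFreeGroup.toFreeGroup ↥H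
  by_cases hss : ∀ a b : IsFreeGroup.Generators H, a = b
  · have hfc : ∀ w₁ w₂ : FreeGroup (IsFreeGroup.Generators H), w₁ * w₂ = w₂ * w₁ := by
      rcases isEmpty_or_nonempty (IsFreeGroup.Generators H) with hE | hN
      · intro w₁ w₂
        rw [all_eq_one hE w₁, all_eq_one hE w₂]
      · obtain ⟨g₀⟩ := hN
        intro w₁ w₂
        obtain ⟨n, hn⟩ := exists_zpow g₀ (fun t => hss t g₀) w₁
        obtain ⟨m, hm⟩ := exists_zpow g₀ (fun t => hss t g₀) w₂
        rw [hn, hm, ← zpow_add, ← zpow_add, add_comm]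
    intro u hu v hv
    have h3 : (⟨u, hu⟩ : H) * ⟨v, hv⟩ = ⟨v, hv⟩ * ⟨u, hu⟩ := by
      apply e.injective
      rw [_root_.map_mul, _root_.map_mul]
      exact hfc (e ⟨u, hu⟩) (e ⟨v, hv⟩)
    exact congrArg Subtype.val h3
  · push_neg at hss
    obtain ⟨a, b, hab⟩ := hss
    exfalso
    have key : ∀ t : IsFreeGroup.Generators H,
        e ⟨z, hzH⟩ * of t = of t * e ⟨z, hzH⟩ := by
      intro t
      have hu := hcen _ (e.symm (of t)).2
      have h1 : (⟨z, hzH⟩ : H) * e.symm (of t) = e.symm (of t) * ⟨z, hzH⟩ :=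
        Subtype.ext hu
      have h2 := congrArg e h1
      rwa [_root_.map_mul, _root_.map_mul, e.apply_symm_apply] at h2
    have hζ := eq_one_of_commute_two hab (key a) (key b)
    have h3 : (⟨z, hzH⟩ : H) = 1 := by
      apply e.injective; rw [hζ, _root_.map_one]
    exact hz (congrArg Subtype.val h3)

/-- Commuting with a common nontrivial element implies commuting. -/
theorem commute_of_commute_ne_one {z x y : FreeGroup α} (hz : z ≠ 1)
    (hx : z * x = x * z) (hy : z * y = y * z) : x * y = y * x := by
  have hzK : z ∈ Subgroup.closure ({x, y, z} : Set (FreeGroup α)) :=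
    Subgroup.subset_closure (by simp)
  have hcen : ∀ u ∈ Subgroup.closure ({x, y, z} : Set (FreeGroup α)), z * u = u * z := by
    intro u hu
    have hle : Subgroup.closure ({x, y, z} : Set (FreeGroup α)) ≤
        Subgroup.centralizer {z} := by
      refine (Subgroup.closure_le _).mpr ?_
      intro t ht
      rw [SetLike.mem_coe, Subgroup.mem_centralizer_iff]
      intro h hh
      rw [Set.mem_singleton_iff] at hh; subst hh
      rcases ht with rfl | rfl | ht
      · exact hx
      · exact hy
      · rw [Set.mem_singleton_iff] at ht; subst ht; rfl
    have := hle hu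
    rw [Subgroup.mem_centralizer_iff] at this
    exact this z rfl
  exact comm_of_central _ z hzK hz hcen x (Subgroup.subset_closure (by simp))
    y (Subgroup.subset_closure (by simp))

end Stmt3Aux

open Stmt3Aux FreeGroup in
/-- A nontrivial normal subgroup of a non-abelian free group contains two
elements whose centralizers intersect trivially. -/
theorem stmt_3 {α : Type*} (hα : ∃ a b : α, a ≠ b)
    (G : Subgroup (FreeGroup α)) [G.Normal] (hG : G ≠ ⊥) :
    ∃ x ∈ G, ∃ y ∈ G,
      Subgroup.centralizer {x} ⊓ Subgroup.centralizer {y} = ⊥ := by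
  classical
  obtain ⟨a, b, hab⟩ := hα
  obtain ⟨⟨g, hgG⟩, hgne⟩ := Subgroup.ne_bot_iff_exists_ne_one.mp hG
  have hg1 : g ≠ 1 := fun h => hgne (Subtype.ext h)
  by_cases hcomm : ∀ u ∈ G, ∀ v ∈ G, u * v = v * u
  · exfalso
    obtain ⟨c, hcG, hpow, _⟩ := cyclic_of_comm G hcomm
    obtain ⟨m, hm⟩ := hpow g hgG
    have hc1 : c ≠ 1 := by rintro rfl; rw [one_zpow] at hm; exact hg1 hm
    have hsq : ∀ w : FreeGroup α, w ^ 2 * c = c * w ^ 2 := by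
      intro w
      obtain ⟨k, hk⟩ := hpow _ (‹G.Normal›.conj_mem c hcG w)
      obtain ⟨k', hk'⟩ := hpow _ (‹G.Normal›.conj_mem c hcG w⁻¹)
      rw [inv_inv] at hk'
      have hcc : c = c ^ (k' * k) := by
        have h3 : c = w⁻¹ * (w * c * w⁻¹) * w := by group
        have h4 : w⁻¹ * c ^ k * w = (w⁻¹ * c * w) ^ k := by
          have h := _root_.map_zpow (MulAut.conj w⁻¹) c k
          simp only [MulAut.conj_apply, inv_inv] at h
          exact h
        conv_lhs => rw [h3, hk]
        rw [h4, hk', ← zpow_mul]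
      have h5 : c ^ (k' * k - 1) = 1 := by
        rw [zpow_sub, zpow_one, ← hcc, mul_inv_cancel]
      have h6 := torsionfree c hc1 _ h5
      have hkk : k' * k = 1 := by omega
      have hku : IsUnit k := IsUnit.of_mul_eq_one k' (by rw [mul_comm]; exact hkk)
      rcases Int.isUnit_iff.mp hku with rfl | rfl
      · rw [zpow_one] at hk
        have hwc : w * c = c * w := by
          conv_rhs => rw [← hk]
          group
        rw [sq, mul_assoc, hwc, ← mul_assoc, hwc, mul_assoc]
      · rw [zpow_neg_one] at hk
        have hwc : w * c = c⁻¹ * w := by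
          conv_rhs => rw [← hk]
          group
        have h7 : w * c⁻¹ * w⁻¹ = c := by
          have := congrArg Inv.inv hk
          simpa [mul_inv_rev, mul_assoc] using this
        have hwc' : w * c⁻¹ = c * w := by
          conv_rhs => rw [← h7]
          group
        calc w ^ 2 * c = w * (w * c) := by rw [sq, mul_assoc]
          _ = w * (c⁻¹ * w) := by rw [hwc]
          _ = w * c⁻¹ * w := by rw [mul_assoc]
          _ = c * w * w := by rw [hwc']
          _ = c * w ^ 2 := by rw [sq, mul_assoc]
    obtain ⟨d, ⟨p, hp⟩, ⟨q, hq⟩⟩ := commute_cyclic c (of a ^ 2) (hsq (of a)).symm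
    obtain ⟨d', ⟨p', hp'⟩, ⟨q', hq'⟩⟩ := commute_cyclic c (of b ^ 2) (hsq (of b)).symm
    have e1 : (2 : ℤ) = q * (expSum a d).toAdd := by
      have := expSum_eq a hq
      rw [_root_.map_pow, toAdd_pow, expSum_of_self] at this
      simpa using this
    have e3 : (0 : ℤ) = q' * (expSum a d').toAdd := by
      have := expSum_eq a hq'
      rw [_root_.map_pow, toAdd_pow, expSum_of_ne (Ne.symm hab)] at this
      simpa using this
    have ha_c : (expSum a c).toAdd = p * (expSum a d).toAdd := expSum_eq a hp
    have ha_c' : (expSum a c).toAdd = p' * (expSum a d').toAdd := expSum_eq a hp'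
    have hp0 : p ≠ 0 := by rintro rfl; rw [zpow_zero] at hp; exact hc1 hp
    have hq'0 : q' ≠ 0 := by
      rintro rfl
      have e4 : (2 : ℤ) = 0 * (expSum b d').toAdd := by
        have := expSum_eq b hq'
        rw [_root_.map_pow, toAdd_pow, expSum_of_self] at this
        simp at this
      rw [zero_mul] at e4; exact two_ne_zero e4
    have had' : (expSum a d').toAdd = 0 := (mul_eq_zero.mp e3.symm).resolve_left hq'0
    have hac0 : (expSum a c).toAdd = 0 := by rw [ha_c', had', mul_zero]
    have had : (expSum a d).toAdd = 0 := by
      have h8 : p * (expSum a d).toAdd = 0 := by rw [← ha_c, hac0]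
      exact (mul_eq_zero.mp h8).resolve_left hp0
    rw [had, mul_zero] at e1
    exact two_ne_zero e1
  · push_neg at hcomm
    obtain ⟨x, hxG, y, hyG, hxy⟩ := hcomm
    refine ⟨x, hxG, y, hyG, ?_⟩
    refine (Subgroup.eq_bot_iff_forall _).mpr ?_
    intro z hz
    rw [Subgroup.mem_inf, Subgroup.mem_centralizer_iff, Subgroup.mem_centralizer_iff] at hz
    obtain ⟨hz1, hz2⟩ := hz
    by_contra hzne
    exact hxy (commute_of_commute_ne_one hzne (hz1 x rfl).symm (hz2 y rfl).symm)
end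

section
/- Let α be a type with at least two distinct elements and let F = FreeGroup α. If G is a normal subgroup of F with G ≠ ⊥, then the centralizer of G in F is trivial: the only element of F that commutes with every element of G is the identity. -/
private lemma freeGroup_eq_one_of_isEmpty {β : Type*} [IsEmpty β] (x : FreeGroup β) : x = 1 := by
  rw [← FreeGroup.toWord_eq_nil_iff]
  cases hw : x.toWord with
  | nil => rfl
  | cons p l => exact (IsEmpty.false p.1).elim

private lemma closure_commute {G : Type*} [Group G] {S : Set G}
    (h : ∀ a ∈ S, ∀ b ∈ S, Commute a b)
    {x y : G} (hx : x ∈ Subgroup.closure S) (hy : y ∈ Subgroup.closure S) : Commute x y := by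
  have h1 : Subgroup.closure S ≤ Subgroup.centralizer S := by
    rw [Subgroup.closure_le]
    intro a ha
    exact Subgroup.mem_centralizer_iff.2 fun b hb => (h b hb a ha).eq
  have h2 : Subgroup.closure S ≤ Subgroup.centralizer {y} := by
    rw [Subgroup.closure_le]
    intro a ha
    exact Subgroup.mem_centralizer_iff.2 fun b hb => by
      rw [Set.mem_singleton_iff] at hb; subst hb
      exact (Subgroup.mem_centralizer_iff.1 (h1 hy) a ha).symm
  exact (Subgroup.mem_centralizer_iff.1 (h2 hx) y rfl).symm

/-- Over a subsingleton type, the free group is generated by one element, with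
injective powers (unless trivial). -/
private lemma freeGroup_gen {β : Type*} [Subsingleton β] :
    ∃ z : FreeGroup β, (∀ x : FreeGroup β, x ∈ Subgroup.zpowers z) ∧
      (z = 1 ∨ ∀ m n : ℤ, z ^ m = z ^ n → m = n) := by
  by_cases hb : Nonempty β
  · obtain ⟨b⟩ := hb
    refine ⟨FreeGroup.of b, fun x => ?_, Or.inr fun m n hmn => ?_⟩
    · have hr : (Set.range (FreeGroup.of : β → FreeGroup β)) = {FreeGroup.of b} := by
        ext y
        constructor
        · rintro ⟨c, rfl⟩; rw [Subsingleton.elim c b]; rfl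
        · rintro rfl; exact ⟨b, rfl⟩
      have h2 := FreeGroup.closure_range_of β
      rw [hr] at h2
      rw [Subgroup.zpowers_eq_closure, h2]; trivial
    · set σ : FreeGroup β →* Multiplicative ℤ :=
        FreeGroup.lift (fun _ => Multiplicative.ofAdd (1 : ℤ)) with hσ
      have key : ∀ k : ℤ, Multiplicative.toAdd (σ (FreeGroup.of b ^ k)) = k := by
        intro k
        rw [map_zpow, toAdd_zpow, hσ, FreeGroup.lift_apply_of]
        simp
      rw [← key m, ← key n, hmn]
  · haveI : IsEmpty β := not_nonempty_iff.mp hb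
    exact ⟨1, fun x => by rw [freeGroup_eq_one_of_isEmpty x]; exact one_mem _, Or.inl rfl⟩

private lemma freeGroup_not_commute {β : Type*} {a b : β} (hab : a ≠ b) :
    ¬ Commute (FreeGroup.of a) (FreeGroup.of b) := by
  classical
  intro h
  have h2 := (h.map (FreeGroup.lift
    (fun x => if x = a then Equiv.swap (0 : Fin 3) 1 else Equiv.swap 0 2))).eq
  rw [← map_mul, ← map_mul] at h2
  simp only [map_mul, FreeGroup.lift_apply_of, if_pos rfl, if_neg (Ne.symm hab)] at h2
  exact absurd h2 (by decide)

/-- A commutative free group is generated by one element, with injective powers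
unless it is trivial. -/
private lemma exists_gen_of_comm {G : Type*} [Group G] [IsFreeGroup G]
    (hcomm : ∀ x y : G, Commute x y) :
    ∃ z : G, (∀ x : G, x ∈ Subgroup.zpowers z) ∧
      (z = 1 ∨ ∀ m n : ℤ, z ^ m = z ^ n → m = n) := by
  haveI hsub : Subsingleton (IsFreeGroup.Generators G) := by
    by_contra hns
    rw [not_subsingleton_iff_nontrivial] at hns
    obtain ⟨a, b, hab⟩ := hns
    refine freeGroup_not_commute hab ?_
    set e := IsFreeGroup.toFreeGroup G
    have h := (hcomm (e.symm (FreeGroup.of a)) (e.symm (FreeGroup.of b))).map e.toMonoidHom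
    simpa using h
  obtain ⟨z₀, hz₀, hinj⟩ := freeGroup_gen (β := IsFreeGroup.Generators G)
  set e := IsFreeGroup.toFreeGroup G
  refine ⟨e.symm z₀, fun x => ?_, ?_⟩
  · obtain ⟨m, hm⟩ := Subgroup.mem_zpowers_iff.mp (hz₀ (e x))
    exact Subgroup.mem_zpowers_iff.mpr
      ⟨m, by rw [← map_zpow, hm, MulEquiv.symm_apply_apply]⟩
  · rcases hinj with h1 | hinj
    · exact Or.inl (by rw [h1, map_one])
    · refine Or.inr fun m n hmn => ?_
      apply hinj
      have := congrArg e hmn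
      simpa [map_zpow] using this

/-- Two commuting elements of a free group lie in a common cyclic subgroup. -/
private lemma commute_cyclic {β : Type*} {u v : FreeGroup β} (h : Commute u v) :
    ∃ z : FreeGroup β, u ∈ Subgroup.zpowers z ∧ v ∈ Subgroup.zpowers z := by
  set H := Subgroup.closure ({u, v} : Set (FreeGroup β)) with hH
  have hS : ∀ a ∈ ({u, v} : Set (FreeGroup β)), ∀ b ∈ ({u, v} : Set (FreeGroup β)),
      Commute a b := by
    rintro p (rfl | rfl) q (rfl | rfl)
    · exact Commute.refl _
    · exact h
    · exact h.symm
    · exact Commute.refl _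
  have hcomm : ∀ x y : H, Commute x y := fun x y =>
    Subtype.ext (closure_commute hS x.2 y.2)
  obtain ⟨ζ, hζ, -⟩ := exists_gen_of_comm hcomm
  have huH : u ∈ H := Subgroup.subset_closure (Set.mem_insert _ _)
  have hvH : v ∈ H := Subgroup.subset_closure (Set.mem_insert_of_mem _ rfl)
  obtain ⟨m, hm⟩ := Subgroup.mem_zpowers_iff.mp (hζ ⟨u, huH⟩)
  obtain ⟨n, hn⟩ := Subgroup.mem_zpowers_iff.mp (hζ ⟨v, hvH⟩)
  refine ⟨(ζ : FreeGroup β), Subgroup.mem_zpowers_iff.mpr ⟨m, ?_⟩,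
    Subgroup.mem_zpowers_iff.mpr ⟨n, ?_⟩⟩
  · rw [← SubgroupClass.coe_zpow, hm]
  · rw [← SubgroupClass.coe_zpow, hn]

/-- An element commuting with a generator is a power of that generator. -/
private lemma commute_of_mem_zpowers {β : Type*} {a : β} {c : FreeGroup β}
    (h : Commute c (FreeGroup.of a)) : ∃ m : ℤ, c = FreeGroup.of a ^ m := by
  classical
  obtain ⟨z, hu', hv'⟩ := commute_cyclic h
  obtain ⟨m, hm⟩ := Subgroup.mem_zpowers_iff.mp hu'
  obtain ⟨k, hk⟩ := Subgroup.mem_zpowers_iff.mp hv'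
  set σ : FreeGroup β →* Multiplicative ℤ :=
    FreeGroup.lift (fun x => Multiplicative.ofAdd (if x = a then (1 : ℤ) else 0)) with hσ
  have hk1 : k * Multiplicative.toAdd (σ z) = 1 := by
    have := congrArg (fun w => Multiplicative.toAdd (σ w)) hk
    simpa [map_zpow, toAdd_zpow, hσ, FreeGroup.lift_apply_of, smul_eq_mul] using this
  rcases Int.isUnit_iff.mp (IsUnit.of_mul_eq_one (a := k) _ hk1) with rfl | rfl
  · rw [zpow_one] at hk
    exact ⟨m, by rw [← hm, hk]⟩
  · rw [zpow_neg, zpow_one] at hk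
    have hz : z = (FreeGroup.of a)⁻¹ := by rw [← hk, inv_inv]
    exact ⟨-m, by rw [← hm, hz, inv_zpow, zpow_neg]⟩

/-- A nontrivial element of a free group cannot commute with two distinct generators. -/
private lemma eq_one_of_commute_of {β : Type*} {a b : β} (hab : a ≠ b) {c : FreeGroup β}
    (ha : Commute c (FreeGroup.of a)) (hb : Commute c (FreeGroup.of b)) : c = 1 := by
  classical
  obtain ⟨m, hm⟩ := commute_of_mem_zpowers ha
  obtain ⟨n, hn⟩ := commute_of_mem_zpowers hb
  set σ : FreeGroup β →* Multiplicative ℤ :=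
    FreeGroup.lift (fun x => Multiplicative.ofAdd (if x = a then (1 : ℤ) else 0)) with hσ
  have h1 : Multiplicative.toAdd (σ c) = m := by
    rw [hm, map_zpow, toAdd_zpow, hσ, FreeGroup.lift_apply_of]
    simp
  have h2 : Multiplicative.toAdd (σ c) = 0 := by
    rw [hn, map_zpow, toAdd_zpow, hσ, FreeGroup.lift_apply_of, if_neg hab.symm]
    simp
  rw [hm, h1.symm.trans h2, zpow_zero]

/-- Commutation with a fixed nontrivial element of a free group is "transitive":
the centralizer of a nontrivial element is commutative. -/
private lemma centralizer_comm {β : Type*} {u : FreeGroup β} (hu : u ≠ 1)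
    {v w : FreeGroup β} (hv : Commute v u) (hw : Commute w u) : Commute v w := by
  set K := Subgroup.centralizer ({u} : Set (FreeGroup β)) with hK
  have hmem : ∀ {t : FreeGroup β}, Commute t u → t ∈ K := fun {t} h =>
    Subgroup.mem_centralizer_iff.2 fun s hs => by
      rw [Set.mem_singleton_iff] at hs; subst hs; exact h.eq.symm
  have huK : u ∈ K := hmem (Commute.refl u)
  have hcommK : ∀ x y : K, Commute x y := by
    by_cases hsub : Subsingleton (IsFreeGroup.Generators K)
    · intro x y
      obtain ⟨z₀, hz₀, -⟩ := freeGroup_gen (β := IsFreeGroup.Generators K)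
      set e := IsFreeGroup.toFreeGroup K
      obtain ⟨m, hm⟩ := Subgroup.mem_zpowers_iff.mp (hz₀ (e x))
      obtain ⟨n, hn⟩ := Subgroup.mem_zpowers_iff.mp (hz₀ (e y))
      have hce : Commute (e x) (e y) := by
        rw [← hm, ← hn]; exact (Commute.refl z₀).zpow_zpow m n
      have := hce.map e.symm.toMonoidHom
      simpa using this
    · exfalso
      rw [not_subsingleton_iff_nontrivial] at hsub
      obtain ⟨a, b, hab⟩ := hsub
      set e := IsFreeGroup.toFreeGroup K
      set c := e ⟨u, huK⟩ with hc
      have hcent : ∀ w' : FreeGroup (IsFreeGroup.Generators K), Commute c w' := by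
        intro w'
        have h0 : ((e.symm w' : K) : FreeGroup β) ∈ K := (e.symm w').2
        have h1 : Commute (⟨u, huK⟩ : K) (e.symm w') :=
          Subtype.ext (Subgroup.mem_centralizer_iff.1 h0 u rfl)
        have h2 := h1.map e.toMonoidHom
        simpa [← hc] using h2
      have hc1 : c = 1 := eq_one_of_commute_of hab (hcent _) (hcent _)
      apply hu
      have : (⟨u, huK⟩ : K) = 1 := e.injective (by rw [← hc, hc1, map_one])
      exact congrArg Subtype.val this
  have hvK : v ∈ K := hmem hv
  have hwK : w ∈ K := hmem hw
  exact Subtype.ext_iff.mp (hcommK ⟨v, hvK⟩ ⟨w, hwK⟩)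

/-- The centralizer of a nontrivial normal subgroup of a non-abelian free group
is trivial. -/
theorem stmt_4 {α : Type*} (hα : ∃ a b : α, a ≠ b)
    (G : Subgroup (FreeGroup α)) [G.Normal] (hG : G ≠ ⊥) :
    Subgroup.centralizer (G : Set (FreeGroup α)) = ⊥ := by
  classical
  obtain ⟨a, b, hab⟩ := hα
  rw [Subgroup.eq_bot_iff_forall]
  intro x hx
  by_contra hx1
  obtain ⟨⟨g, hgG⟩, hg1'⟩ := Subgroup.ne_bot_iff_exists_ne_one.mp hG
  have hg1 : g ≠ 1 := fun h => hg1' (Subtype.ext h)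
  have hxg : ∀ g' ∈ G, Commute x g' := fun g' hg' =>
    ((Subgroup.mem_centralizer_iff.1 hx) g' hg').symm
  -- all conjugates of x commute with every element of G
  have hconj_mem : ∀ f : FreeGroup α, ∀ g' ∈ G, Commute (f * x * f⁻¹) g' := by
    intro f g' hg'
    have h1 : f⁻¹ * g' * f ∈ G := Subgroup.Normal.conj_mem' ‹G.Normal› g' hg' f
    have h2 := (hxg _ h1).map (MulAut.conj f).toMonoidHom
    have h3 : (MulAut.conj f) (f⁻¹ * g' * f) = g' := by
      rw [MulAut.conj_apply]; group
    rw [MulEquiv.coe_toMonoidHom, h3, MulAut.conj_apply] at h2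
    exact h2
  -- hence, by commutative transitivity at g, conjugates of x pairwise commute
  have hpair : ∀ f f' : FreeGroup α, Commute (f * x * f⁻¹) (f' * x * f'⁻¹) := fun f f' =>
    centralizer_comm hg1 (hconj_mem f g hgG) (hconj_mem f' g hgG)
  -- the normal closure of x is commutative
  set N := Subgroup.normalClosure ({x} : Set (FreeGroup α)) with hN
  haveI : N.Normal := Subgroup.normalClosure_normal
  have hScomm : ∀ p ∈ Group.conjugatesOfSet ({x} : Set (FreeGroup α)),
      ∀ q ∈ Group.conjugatesOfSet ({x} : Set (FreeGroup α)), Commute p q := by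
    intro p hp q hq
    rw [Group.mem_conjugatesOfSet_iff] at hp hq
    obtain ⟨x1, hx1', hcx⟩ := hp
    obtain ⟨x2, hx2', hcy⟩ := hq
    rw [Set.mem_singleton_iff] at hx1' hx2'
    subst hx1'; subst hx2'
    rw [isConj_iff] at hcx hcy
    obtain ⟨c1, hc1⟩ := hcx
    obtain ⟨c2, hc2⟩ := hcy
    rw [← hc1, ← hc2]
    exact hpair c1 c2
  have hNcomm : ∀ p q : N, Commute p q := fun p q =>
    Subtype.ext (closure_commute hScomm p.2 q.2)
  have hxN : x ∈ N := Subgroup.subset_normalClosure (Set.mem_singleton x)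
  obtain ⟨ζ, hζ, hinj⟩ := exists_gen_of_comm hNcomm
  have hζ1 : (ζ : FreeGroup α) ≠ 1 := by
    intro h
    obtain ⟨m, hm⟩ := Subgroup.mem_zpowers_iff.mp (hζ ⟨x, hxN⟩)
    apply hx1
    have := congrArg Subtype.val hm
    rw [SubgroupClass.coe_zpow, h, one_zpow] at this
    exact this.symm
  have hinj' : ∀ m n : ℤ, ζ ^ m = ζ ^ n → m = n := by
    rcases hinj with h1 | h
    · exact absurd (congrArg Subtype.val h1) hζ1
    · exact h
  -- every conjugate of ζ is ζ or ζ⁻¹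
  have hconjN : ∀ f : FreeGroup α,
      f * (ζ : FreeGroup α) * f⁻¹ = ζ ∨ f * (ζ : FreeGroup α) * f⁻¹ = (ζ : FreeGroup α)⁻¹ := by
    intro f
    have h1 : f * (ζ : FreeGroup α) * f⁻¹ ∈ N := ‹N.Normal›.conj_mem _ ζ.2 f
    have h2 : f⁻¹ * (ζ : FreeGroup α) * f ∈ N := ‹N.Normal›.conj_mem' _ ζ.2 f
    obtain ⟨m, hm⟩ := Subgroup.mem_zpowers_iff.mp (hζ ⟨_, h1⟩)
    obtain ⟨m', hm'⟩ := Subgroup.mem_zpowers_iff.mp (hζ ⟨_, h2⟩)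
    have hm2 : (ζ : FreeGroup α) ^ m = f * (ζ : FreeGroup α) * f⁻¹ := by
      have := congrArg Subtype.val hm
      rwa [SubgroupClass.coe_zpow] at this
    have hm'2 : (ζ : FreeGroup α) ^ m' = f⁻¹ * (ζ : FreeGroup α) * f := by
      have := congrArg Subtype.val hm'
      rwa [SubgroupClass.coe_zpow] at this
    have key : (ζ : FreeGroup α) ^ (1 : ℤ) = (ζ : FreeGroup α) ^ (m' * m) := by
      calc (ζ : FreeGroup α) ^ (1 : ℤ) = (ζ : FreeGroup α) := zpow_one _
        _ = f⁻¹ * (f * (ζ : FreeGroup α) * f⁻¹) * f := by group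
        _ = f⁻¹ * (ζ : FreeGroup α) ^ m * f := by rw [← hm2]
        _ = (f⁻¹ * (ζ : FreeGroup α) * f) ^ m := by
              have hcz := conj_zpow (i := m) (a := f⁻¹) (b := (ζ : FreeGroup α))
              rw [inv_inv] at hcz
              exact hcz.symm
        _ = ((ζ : FreeGroup α) ^ m') ^ m := by rw [hm'2]
        _ = (ζ : FreeGroup α) ^ (m' * m) := by rw [← zpow_mul]
    have := hinj' 1 (m' * m) (Subtype.ext (by
      rw [SubgroupClass.coe_zpow, SubgroupClass.coe_zpow]; exact key))
    rcases Int.isUnit_iff.mp (IsUnit.of_mul_eq_one (a := m) m' (by linarith)) with h | h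
    · left; rw [← hm2, h, zpow_one]
    · right; rw [← hm2, h]
      rw [zpow_neg, zpow_one]
  -- squares of all elements commute with ζ
  have hsq : ∀ f : FreeGroup α, Commute (f * f) (ζ : FreeGroup α) := by
    intro f
    rcases hconjN f with h | h
    · have hcf : Commute f (ζ : FreeGroup α) := by
        have : f * (ζ : FreeGroup α) = ζ * f := by
          conv_rhs => rw [← h]
          group
        exact this
      exact hcf.mul_left hcf
    · show f * f * (ζ : FreeGroup α) = (ζ : FreeGroup α) * (f * f)
      calc f * f * (ζ : FreeGroup α)
          = f * (f * (ζ : FreeGroup α) * f⁻¹) * f := by group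
        _ = f * (ζ : FreeGroup α)⁻¹ * f := by rw [h]
        _ = (f * (ζ : FreeGroup α) * f⁻¹)⁻¹ * (f * f) := by group
        _ = ((ζ : FreeGroup α)⁻¹)⁻¹ * (f * f) := by rw [h]
        _ = (ζ : FreeGroup α) * (f * f) := by rw [inv_inv]
  -- so (of a)² and (of b)² commute, contradiction
  have hts : Commute (FreeGroup.of a * FreeGroup.of a) (FreeGroup.of b * FreeGroup.of b) :=
    centralizer_comm hζ1 (hsq (FreeGroup.of a)) (hsq (FreeGroup.of b))
  set φ : FreeGroup α →* Equiv.Perm (Fin 5) :=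
    FreeGroup.lift (fun y => if y = a then Equiv.swap 0 1 * Equiv.swap 1 2
      else Equiv.swap 2 3 * Equiv.swap 3 4) with hφ
  have h2 := (hts.map φ).eq
  simp only [hφ, map_mul, FreeGroup.lift_apply_of] at h2
  simp only [if_true, if_neg (Ne.symm hab)] at h2
  exact absurd h2 (by decide)
end

section
/- Let α be a type and let F = FreeGroup α. For every element g ∈ F with g ≠ 1, the centralizer of g in F is a cyclic subgroup; that is, there exists h ∈ F such that Subgroup.centralizer {g} = Subgroup.zpowers h. -/
open FreeGroup

lemma aux_tail_reduced {β : Type*} [DecidableEq β] {x : β × Bool} {t : List (β × Bool)}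
    (h : reduce (x :: t) = x :: t) : reduce t = t := by
  rw [reduce.cons] at h
  rcases ht : reduce t with _ | ⟨hd, tl⟩
  · rw [ht] at h
    simp only at h
    have hlen := congrArg List.length h
    simp at hlen
    simp [hlen]
  · rw [ht] at h
    by_cases hc : x.1 = hd.1 ∧ x.2 = !hd.2
    · simp only [hc, and_self, if_true] at h
      have hlen : (reduce t).length ≤ t.length := Red.length_le (reduce.red)
      rw [ht] at hlen
      have := congrArg List.length h
      simp at this hlen; omega
    · simp only [hc, if_false] at h
      exact List.tail_eq_of_cons_eq h

-- peeling the first letter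
lemma aux_peel {β : Type*} [DecidableEq β] {z : FreeGroup β} {x : β} {b : Bool}
    {t : List (β × Bool)} (h : z.toWord = (x, b) :: t) :
    (FreeGroup.mk [(x, !b)] * z).toWord = t := by
  have hz : z = FreeGroup.mk ((x, b) :: t) := by rw [← h, mk_toWord]
  have hred : reduce ((x, b) :: t) = (x, b) :: t := by
    rw [← h]; exact reduce_toWord z
  rw [hz, mul_mk, toWord_mk, List.singleton_append, reduce.cons, hred]
  simp

lemma aux_mk_single_true {β : Type*} (x : β) : FreeGroup.mk [(x, true)] = FreeGroup.of x := rfl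

lemma aux_mk_single_false {β : Type*} (x : β) : FreeGroup.mk [(x, false)] = (FreeGroup.of x)⁻¹ := by
  rw [← aux_mk_single_true, inv_mk]; rfl

lemma aux_mk_single_mem {β : Type*} (x : β) (c : Bool) :
    FreeGroup.mk [(x, c)] ∈ Subgroup.zpowers (FreeGroup.of x) := by
  cases c
  · rw [aux_mk_single_false]; exact Subgroup.inv_mem _ (Subgroup.mem_zpowers _)
  · rw [aux_mk_single_true]; exact Subgroup.mem_zpowers _

lemma aux_mk_single_comm {β : Type*} (x : β) (c : Bool) :
    Commute (FreeGroup.mk [(x, c)]) (FreeGroup.of x) := by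
  cases c
  · rw [aux_mk_single_false]; exact (Commute.refl _).inv_left
  · rw [aux_mk_single_true]

lemma aux_replicate {γ : Type*} : ∀ (l : List γ) (x : γ),
    x :: l = l ++ [x] → l = List.replicate l.length x := by
  intro l
  induction l with
  | nil => intro x _; rfl
  | cons y t ih =>
    intro x h
    simp only [List.cons_append] at h
    obtain ⟨h1, h2⟩ := List.cons_eq_cons.mp h
    subst h1
    have := ih x h2
    rw [List.length_cons, List.replicate_succ, ← this]

lemma aux_invRev_cons {β : Type*} (p : β × Bool) (m : List (β × Bool)) :
    FreeGroup.invRev (p :: m) = FreeGroup.invRev m ++ [(p.1, !p.2)] := by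
  simp [invRev]

lemma aux_comm_of {β : Type*} [DecidableEq β] (a : β) :
    ∀ (n : ℕ) (z : FreeGroup β), z.toWord.length = n → Commute z (FreeGroup.of a) →
      z ∈ Subgroup.zpowers (FreeGroup.of a) := by
  intro n
  induction n using Nat.strong_induction_on with
  | _ n ih =>
    intro z hn hcomm
    rcases hw : z.toWord with _ | ⟨⟨x, b⟩, t⟩
    · have : z = 1 := toWord_eq_nil_iff.mp hw
      rw [this]; exact Subgroup.one_mem _
    · by_cases hxa : x = a
      · -- peel from the left
        subst hxa
        set z' := FreeGroup.mk [(x, !b)] * z with hz'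
        have ht : z'.toWord = t := aux_peel hw
        have hlen : t.length < n := by rw [← hn, hw]; simp
        have hc' : Commute z' (FreeGroup.of x) := (aux_mk_single_comm x (!b)).mul_left hcomm
        have hmem := ih t.length hlen z' (by rw [ht]) hc'
        have : z = (FreeGroup.mk [(x, !b)])⁻¹ * z' := by rw [hz']; group
        rw [this]
        exact Subgroup.mul_mem _ (Subgroup.inv_mem _ (aux_mk_single_mem x (!b))) hmem
      · -- look at the last letter
        have hwne : z.toWord ≠ [] := by rw [hw]; simp
        obtain ⟨l', y, hconcat⟩ := List.eq_nil_or_concat z.toWord |>.resolve_left hwne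
        obtain ⟨c, d⟩ := y
        by_cases hca : c = a
        · -- peel from the right, i.e. from the left of z⁻¹
          subst hca
          have hinv : z⁻¹.toWord = (c, !d) :: FreeGroup.invRev l' := by
            rw [toWord_inv, hconcat]
            simp [invRev]
          set z'' := FreeGroup.mk [(c, !(!d))] * z⁻¹ with hz''
          have ht : z''.toWord = FreeGroup.invRev l' := aux_peel hinv
          have hlen : (FreeGroup.invRev l').length < n := by
            rw [← hn, hconcat, invRev_length]; simp
          have hc' : Commute z'' (FreeGroup.of c) :=
            (aux_mk_single_comm c (!(!d))).mul_left hcomm.inv_left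
          have hmem := ih _ hlen z'' (by rw [ht]) hc'
          have : z = ((FreeGroup.mk [(c, !(!d))])⁻¹ * z'')⁻¹ := by rw [hz'']; group
          rw [this]
          exact Subgroup.inv_mem _ <|
            Subgroup.mul_mem _ (Subgroup.inv_mem _ (aux_mk_single_mem c _)) hmem
        · -- no cancellation on either side: word is a constant power, contradiction with hxa
          exfalso
          have hredw : reduce z.toWord = z.toWord := reduce_toWord z
          have h1 : (FreeGroup.of a * z).toWord = (a, true) :: z.toWord := by
            conv_lhs => rw [← mk_toWord (x := z), ← aux_mk_single_true, mul_mk, toWord_mk]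
            rw [List.singleton_append, reduce.cons, hredw, hw]
            simp [hxa, Ne.symm hxa]
          have hinvred : reduce z⁻¹.toWord = z⁻¹.toWord := reduce_toWord _
          have hinvw : z⁻¹.toWord = (c, !d) :: FreeGroup.invRev l' := by
            rw [toWord_inv, hconcat]; simp [invRev]
          have h2 : ((FreeGroup.of a)⁻¹ * z⁻¹).toWord = (a, false) :: z⁻¹.toWord := by
            conv_lhs => rw [← mk_toWord (x := z⁻¹), ← aux_mk_single_false, mul_mk, toWord_mk]
            rw [List.singleton_append, reduce.cons, hinvred, hinvw]
            simp [hca, Ne.symm hca]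
          have h3 : (z * FreeGroup.of a).toWord = z.toWord ++ [(a, true)] := by
            have hzz : z * FreeGroup.of a = ((FreeGroup.of a)⁻¹ * z⁻¹)⁻¹ := by group
            rw [hzz, toWord_inv, h2, aux_invRev_cons, toWord_inv, invRev_invRev]; rfl
          have heq : (a, true) :: z.toWord = z.toWord ++ [(a, true)] := by
            rw [← h1, ← h3, hcomm.eq]
          have hrep := aux_replicate z.toWord (a, true) heq
          rw [hw, List.length_cons, List.replicate_succ] at hrep
          have : (x, b) = (a, true) := List.head_eq_of_cons_eq hrep
          exact hxa (congrArg Prod.fst this)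

lemma aux_letters {β : Type*} [DecidableEq β] {a : β} {z : FreeGroup β}
    (hz : z ∈ Subgroup.zpowers (FreeGroup.of a)) : ∀ p ∈ z.toWord, p.1 = a := by
  obtain ⟨m, rfl⟩ := Subgroup.mem_zpowers_iff.mp hz
  rcases m with n | n
  · rw [Int.ofNat_eq_coe, zpow_natCast, toWord_of_pow]
    intro p hp
    rw [List.eq_of_mem_replicate hp]
  · rw [zpow_negSucc, toWord_inv, toWord_of_pow]
    intro p hp
    simp only [invRev, List.mem_reverse, List.mem_map] at hp
    obtain ⟨q, hq, rfl⟩ := hp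
    rw [List.eq_of_mem_replicate hq]

/-- Centralizers of nontrivial elements of a free group are cyclic. -/
theorem stmt_5 {α : Type*} (g : FreeGroup α) (hg : g ≠ 1) :
    ∃ h : FreeGroup α, Subgroup.centralizer {g} = Subgroup.zpowers h := by
  classical
  set C := Subgroup.centralizer ({g} : Set (FreeGroup α)) with hC
  have hgC : g ∈ C := Subgroup.mem_centralizer_iff.mpr (by rintro h rfl; rfl)
  let e : C ≃* FreeGroup (IsFreeGroup.Generators C) := IsFreeGroup.toFreeGroup ↥C
  set z : FreeGroup (IsFreeGroup.Generators C) := e ⟨g, hgC⟩ with hzdef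
  have hz1 : z ≠ 1 := by
    intro h
    apply hg
    have : (⟨g, hgC⟩ : C) = 1 := e.injective (by rw [← hzdef, h, _root_.map_one])
    exact congrArg Subtype.val this
  have hcent : ∀ u : FreeGroup (IsFreeGroup.Generators C), Commute z u := by
    intro u
    have h1 : Commute (⟨g, hgC⟩ : C) (e.symm u) := by
      have := Subgroup.mem_centralizer_iff.mp (e.symm u).2
      exact Subtype.ext (this g rfl)
    have := h1.map e.toMonoidHom
    simpa using this
  -- z's word is nonempty
  have hwne : z.toWord ≠ [] := fun h => hz1 (toWord_eq_nil_iff.mp h)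
  obtain ⟨p, hp⟩ := List.exists_mem_of_ne_nil z.toWord hwne
  set a0 := p.1 with ha0
  -- all generators are equal
  have hsub : ∀ a : IsFreeGroup.Generators C, a = a0 := by
    intro a
    have hmem := aux_comm_of a z.toWord.length z rfl (hcent (FreeGroup.of a))
    rw [ha0]
    exact (aux_letters hmem p hp).symm
  have hall : ∀ u : FreeGroup (IsFreeGroup.Generators C),
      u ∈ Subgroup.zpowers (FreeGroup.of a0) := by
    intro u
    induction u using FreeGroup.induction_on with
    | C1 => exact Subgroup.one_mem _
    | of x => rw [hsub x]
              exact Subgroup.mem_zpowers _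
    | inv_of x hx => exact Subgroup.inv_mem _ hx
    | mul x y hx hy => exact Subgroup.mul_mem _ hx hy
  refine ⟨(e.symm (FreeGroup.of a0) : C), le_antisymm ?_ ?_⟩
  · intro x hx
    obtain ⟨k, hk⟩ := Subgroup.mem_zpowers_iff.mp (hall (e ⟨x, hx⟩))
    have : e.symm (FreeGroup.of a0) ^ k = ⟨x, hx⟩ := by
      rw [← map_zpow, hk, MulEquiv.symm_apply_apply]
    refine Subgroup.mem_zpowers_iff.mpr ⟨k, ?_⟩
    rw [← SubgroupClass.coe_zpow, this]
  · exact Subgroup.zpowers_le.mpr (e.symm (FreeGroup.of a0)).2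
end

section
/- Let α be a type and let F = FreeGroup α. If g, h ∈ F commute (g * h = h * g), then there exists k ∈ F such that both g and h are integer powers of k, i.e., g ∈ Subgroup.zpowers k and h ∈ Subgroup.zpowers k. -/
private lemma of_mul_comm' {X : Type*} (a b : X)
    (h : FreeGroup.of a * FreeGroup.of b = FreeGroup.of b * FreeGroup.of a) : a = b := by
  classical
  have := congrArg FreeGroup.toWord h
  rw [show (FreeGroup.of a : FreeGroup X) = FreeGroup.mk [(a, true)] from rfl,
    show (FreeGroup.of b : FreeGroup X) = FreeGroup.mk [(b, true)] from rfl,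
    FreeGroup.mul_mk, FreeGroup.mul_mk, FreeGroup.toWord_mk, FreeGroup.toWord_mk] at this
  simp [FreeGroup.reduce] at this
  exact this.1

private lemma zpowers_of_top {X : Type*} [Unique X] (x : FreeGroup X) :
    x ∈ Subgroup.zpowers (FreeGroup.of (default : X)) := by
  induction x using FreeGroup.induction_on with
  | C1 => exact Subgroup.one_mem _
  | of a => rw [Unique.eq_default a]; exact Subgroup.mem_zpowers _
  | inv_of a ih => exact Subgroup.inv_mem _ ih
  | mul a b iha ihb => exact Subgroup.mul_mem _ iha ihb

/-- Commuting elements of a free group are powers of a common element. -/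
theorem stmt_6 {α : Type*} (g h : FreeGroup α) (hgh : g * h = h * g) :
    ∃ k : FreeGroup α, g ∈ Subgroup.zpowers k ∧ h ∈ Subgroup.zpowers k := by
  classical
  set H := Subgroup.closure ({g, h} : Set (FreeGroup α)) with hH
  have hg : g ∈ H := Subgroup.subset_closure (by simp)
  have hh : h ∈ H := Subgroup.subset_closure (by simp)
  -- all elements of H commute
  have hle : H ≤ Subgroup.centralizer ({g, h} : Set (FreeGroup α)) := by
    apply Subgroup.closure_le _ |>.mpr
    intro z hz
    refine Subgroup.mem_centralizer_iff.mpr ?_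
    intro w hw
    rcases hz with rfl | rfl <;> rcases hw with rfl | rfl <;>
      first | rfl | exact hgh | exact hgh.symm
  have key : ∀ x ∈ H, ∀ y ∈ H, x * y = y * x := by
    intro x hx y hy
    have hx' := hle hx
    rw [Subgroup.mem_centralizer_iff] at hx'
    have : H ≤ Subgroup.centralizer ({x} : Set (FreeGroup α)) := by
      apply Subgroup.closure_le _ |>.mpr
      intro z hz
      refine Subgroup.mem_centralizer_iff.mpr ?_
      intro w hw
      rcases hw with rfl
      rcases hz with rfl | rfl
      · exact (hx' _ (by simp)).symm
      · exact (hx' _ (by simp)).symm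
    have hy' := this hy
    rw [Subgroup.mem_centralizer_iff] at hy'
    exact hy' x (by simp)
  -- H is free
  haveI : IsFreeGroup H := inferInstance
  set X := IsFreeGroup.Generators H
  let e : H ≃* FreeGroup X := IsFreeGroup.toFreeGroup H
  have hsub : Subsingleton X := by
    constructor
    intro a b
    apply of_mul_comm' a b
    have : e.symm (FreeGroup.of a) * e.symm (FreeGroup.of b)
        = e.symm (FreeGroup.of b) * e.symm (FreeGroup.of a) := by
      apply Subtype.ext
      exact key _ (e.symm (FreeGroup.of a)).2 _ (e.symm (FreeGroup.of b)).2
    have := congrArg e this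
    simpa using this
  by_cases hX : Nonempty X
  · haveI : Unique X := @Unique.mk' X ⟨Classical.choice hX⟩ hsub
    refine ⟨(e.symm (FreeGroup.of default) : H), ?_, ?_⟩
    · obtain ⟨n, hn⟩ := zpowers_of_top (e ⟨g, hg⟩)
      have hn' : FreeGroup.of (default : X) ^ n = e ⟨g, hg⟩ := hn
      refine ⟨n, ?_⟩
      have : (e.symm (FreeGroup.of (default : X))) ^ n = ⟨g, hg⟩ := by
        rw [← map_zpow, hn', MulEquiv.symm_apply_apply]
      calc ((e.symm (FreeGroup.of (default : X)) : H) : FreeGroup α) ^ n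
          = (((e.symm (FreeGroup.of (default : X))) ^ n : H) : FreeGroup α) := by
            rw [SubgroupClass.coe_zpow]
        _ = g := by rw [this]
    · obtain ⟨n, hn⟩ := zpowers_of_top (e ⟨h, hh⟩)
      have hn' : FreeGroup.of (default : X) ^ n = e ⟨h, hh⟩ := hn
      refine ⟨n, ?_⟩
      have : (e.symm (FreeGroup.of (default : X))) ^ n = ⟨h, hh⟩ := by
        rw [← map_zpow, hn', MulEquiv.symm_apply_apply]
      calc ((e.symm (FreeGroup.of (default : X)) : H) : FreeGroup α) ^ n
          = (((e.symm (FreeGroup.of (default : X))) ^ n : H) : FreeGroup α) := by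
            rw [SubgroupClass.coe_zpow]
        _ = h := by rw [this]
  · haveI : IsEmpty X := not_nonempty_iff.mp hX
    haveI : Unique (FreeGroup X) := inferInstance
    have hg1 : g = 1 := by
      have : e ⟨g, hg⟩ = e 1 := Subsingleton.elim _ _
      have := e.injective this
      simpa [Subtype.ext_iff] using this
    have hh1 : h = 1 := by
      have : e ⟨h, hh⟩ = e 1 := Subsingleton.elim _ _
      have := e.injective this
      simpa [Subtype.ext_iff] using this
    exact ⟨1, by simp [hg1], by simp [hh1]⟩
end

section
/- Let α be a type with at least two distinct elements and let F = FreeGroup α. Every normal subgroup G of F with G ≠ ⊥ is non-abelian: there exist x, y ∈ G with x * y ≠ y * x. -/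
open FreeGroup

open Classical in
/-- Exponent-sum homomorphism counting occurrences of a fixed letter. -/
noncomputable def expSum {β : Type*} (b : β) : FreeGroup β →* Multiplicative ℤ :=
  FreeGroup.lift (fun x => if x = b then Multiplicative.ofAdd 1 else 1)

lemma expSum_of_self {β : Type*} (b : β) : expSum b (of b) = Multiplicative.ofAdd 1 := by
  classical
  simp [expSum]

lemma expSum_of_ne {β : Type*} {b c : β} (h : c ≠ b) : expSum b (of c) = 1 := by
  classical
  simp [expSum, h]

/-- Distinct generators of a free group do not commute. -/
lemma of_not_commute {β : Type*} {s t : β} (h : s ≠ t) :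
    of s * of t ≠ of t * of s := by
  classical
  intro hc
  let σ : Equiv.Perm (Fin 3) := Equiv.swap 0 1
  let τ : Equiv.Perm (Fin 3) := Equiv.swap 1 2
  let f : FreeGroup β →* Equiv.Perm (Fin 3) :=
    FreeGroup.lift (fun x => if x = s then σ else τ)
  have hfs : f (of s) = σ := by simp [f]
  have hft : f (of t) = τ := by simp [f, h.symm]
  have : σ * τ = τ * σ := by
    have := congrArg f hc
    simpa [hfs, hft] using this
  have : ¬ (σ * τ = τ * σ) := by decide
  exact this ‹_›

/-- An abelian subgroup of a free group is trivial or infinite cyclic. -/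
lemma abelian_subgroup_cyclic {α : Type*} (H : Subgroup (FreeGroup α))
    (hab : ∀ x ∈ H, ∀ y ∈ H, x * y = y * x) :
    (∀ g ∈ H, g = (1 : FreeGroup α)) ∨
      ∃ w ∈ H, (∀ g ∈ H, ∃ k : ℤ, g = w ^ k) ∧ (∀ n : ℤ, w ^ n = 1 → n = 0) := by
  classical
  haveI : IsFreeGroup H := inferInstance
  set S := IsFreeGroup.Generators H with hS
  let e : H ≃* FreeGroup S := IsFreeGroup.toFreeGroup H
  have hsub : Subsingleton S := by
    constructor
    intro s t
    by_contra hst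
    have hcom : of s * of t = of t * of s := by
      have h1 : e.symm (of s * of t) = e.symm (of s) * e.symm (of t) := map_mul _ _ _
      have h2 : e.symm (of t * of s) = e.symm (of t) * e.symm (of s) := map_mul _ _ _
      have := hab (e.symm (of s)).1 (e.symm (of s)).2 (e.symm (of t)).1 (e.symm (of t)).2
      have h3 : e.symm (of s) * e.symm (of t) = e.symm (of t) * e.symm (of s) :=
        Subtype.ext this
      apply e.symm.injective
      rw [h1, h2, h3]
    exact of_not_commute hst hcom
  rcases isEmpty_or_nonempty S with hE | hN
  · left
    intro g hg
    have h1 : e ⟨g, hg⟩ = e 1 := by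
      have : ∀ x : FreeGroup S, x = 1 := by
        intro x
        induction x with
        | C1 => rfl
        | of a => exact hE.elim a
        | inv_of a _ => exact hE.elim a
        | mul a b ha hb => rw [ha, hb, one_mul]
      rw [this (e ⟨g, hg⟩), this (e 1)]
    have := e.injective h1
    exact congrArg Subtype.val this
  · right
    obtain ⟨s⟩ := hN
    refine ⟨(e.symm (of s) : H), (e.symm (of s)).2, ?_, ?_⟩
    · intro g hg
      have key : ∀ x : FreeGroup S, ∃ k : ℤ, x = of s ^ k := by
        intro x
        induction x with
        | C1 => exact ⟨0, by simp⟩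
        | of a => exact ⟨1, by rw [Subsingleton.elim a s, zpow_one]⟩
        | inv_of a _ => exact ⟨-1, by rw [Subsingleton.elim a s]; simp⟩
        | mul a b ha hb =>
          obtain ⟨k, hk⟩ := ha
          obtain ⟨m, hm⟩ := hb
          exact ⟨k + m, by rw [hk, hm, zpow_add]⟩
      obtain ⟨k, hk⟩ := key (e ⟨g, hg⟩)
      refine ⟨k, ?_⟩
      have : (⟨g, hg⟩ : H) = e.symm (of s) ^ k := by
        apply e.injective
        rw [map_zpow, MulEquiv.apply_symm_apply, ← hk]
      have := congrArg Subtype.val this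
      simpa using this
    · intro n hn
      have h1 : ((e.symm (of s) : H) : FreeGroup α) ^ n = ((e.symm (of s) ^ n : H) : FreeGroup α) := by
        simp
      have h2 : (e.symm (of s) ^ n : H) = 1 := by
        apply Subtype.ext
        rw [← h1, hn]
        rfl
      have h3 : (of s : FreeGroup S) ^ n = 1 := by
        have := congrArg e h2
        rw [map_zpow, MulEquiv.apply_symm_apply, _root_.map_one] at this
        exact this
      have := congrArg (expSum s) h3
      rw [map_zpow, expSum_of_self, (expSum s).map_one] at this
      have : (n : ℤ) = 0 := by
        simpa [← ofAdd_zsmul] using this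
      exact this

/-- A free group is torsion-free. -/
lemma freeGroup_torsionfree {α : Type*} {z : FreeGroup α} (hz : z ≠ 1)
    {n : ℤ} (hn : z ^ n = 1) : n = 0 := by
  have hab : ∀ x ∈ Subgroup.zpowers z, ∀ y ∈ Subgroup.zpowers z, x * y = y * x := by
    rintro x ⟨i, rfl⟩ y ⟨j, rfl⟩
    rw [← zpow_add, ← zpow_add, add_comm]
  rcases abelian_subgroup_cyclic (Subgroup.zpowers z) hab with h | ⟨w, _, hpow, hinj⟩
  · exact absurd (h z (Subgroup.mem_zpowers z)) hz
  · obtain ⟨k, hk⟩ := hpow z (Subgroup.mem_zpowers z)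
    have hk0 : k ≠ 0 := by
      rintro rfl
      simp at hk
      exact hz hk
    have : w ^ (k * n) = 1 := by rw [zpow_mul, ← hk, hn]
    have := hinj _ this
    rcases mul_eq_zero.1 this with h | h
    · exact absurd h hk0
    · exact h

/-- Commuting elements of a free group are powers of a common element. -/
lemma commute_common_power {α : Type*} {u v : FreeGroup α} (h : u * v = v * u) :
    ∃ z : FreeGroup α, (∃ i : ℤ, u = z ^ i) ∧ (∃ j : ℤ, v = z ^ j) := by
  set K := Subgroup.closure ({u, v} : Set (FreeGroup α)) with hK
  have hu : u ∈ K := Subgroup.subset_closure (by simp)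
  have hv : v ∈ K := Subgroup.subset_closure (by simp)
  -- every element of K commutes with u and with v
  have hcu : ∀ x ∈ K, u * x = x * u := by
    intro x hx
    refine Subgroup.closure_induction ?_ (by simp) ?_ ?_ hx
    · rintro y (rfl | rfl)
      · rfl
      · exact h
    · intro y z _ _ hy hz
      calc u * (y * z) = (u * y) * z := by rw [← mul_assoc]
        _ = y * (u * z) := by rw [hy, mul_assoc]
        _ = (y * z) * u := by rw [hz, ← mul_assoc]
    · intro y _ hy
      calc u * y⁻¹ = y⁻¹ * (y * u) * y⁻¹ := by group
        _ = y⁻¹ * (u * y) * y⁻¹ := by rw [← hy]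
        _ = y⁻¹ * u := by group
  have hcv : ∀ x ∈ K, v * x = x * v := by
    intro x hx
    refine Subgroup.closure_induction ?_ (by simp) ?_ ?_ hx
    · rintro y (rfl | rfl)
      · exact h.symm
      · rfl
    · intro y z _ _ hy hz
      calc v * (y * z) = (v * y) * z := by rw [← mul_assoc]
        _ = y * (v * z) := by rw [hy, mul_assoc]
        _ = (y * z) * v := by rw [hz, ← mul_assoc]
    · intro y _ hy
      calc v * y⁻¹ = y⁻¹ * (y * v) * y⁻¹ := by group
        _ = y⁻¹ * (v * y) * y⁻¹ := by rw [← hy]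
        _ = y⁻¹ * v := by group
  have hab : ∀ x ∈ K, ∀ y ∈ K, x * y = y * x := by
    intro x hx y hy
    -- y commutes with everything in K since u, v commute with y
    refine Subgroup.closure_induction ?_ (by simp) ?_ ?_ hx
    · rintro w (rfl | rfl)
      · exact hcu y hy
      · exact hcv y hy
    · intro w z _ _ hw hz
      calc (w * z) * y = w * (z * y) := by rw [mul_assoc]
        _ = (w * y) * z := by rw [hz, ← mul_assoc]
        _ = y * (w * z) := by rw [hw, mul_assoc]
    · intro w _ hw
      calc w⁻¹ * y = w⁻¹ * (y * w) * w⁻¹ := by group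
        _ = w⁻¹ * (w * y) * w⁻¹ := by rw [← hw]
        _ = y * w⁻¹ := by group
  rcases abelian_subgroup_cyclic K hab with hh | ⟨w, _, hpow, _⟩
  · exact ⟨1, ⟨0, by rw [hh u hu]; simp⟩, ⟨0, by rw [hh v hv]; simp⟩⟩
  · exact ⟨w, hpow u hu, hpow v hv⟩

/-- A nontrivial normal subgroup of a non-abelian free group is non-abelian. -/
theorem stmt_7 {α : Type*} (hα : ∃ a b : α, a ≠ b)
    (G : Subgroup (FreeGroup α)) [G.Normal] (hG : G ≠ ⊥) :
    ∃ x ∈ G, ∃ y ∈ G, x * y ≠ y * x := by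
  classical
  by_contra hcon
  push_neg at hcon
  obtain ⟨a, b, hab⟩ := hα
  -- G is abelian, hence cyclic with generator w of infinite order
  rcases abelian_subgroup_cyclic G hcon with h | ⟨w, hwG, hpow, hinj⟩
  · exact hG (by ext g; simp [Subgroup.mem_bot]; exact ⟨fun hg => h g hg, fun hg => hg ▸ G.one_mem⟩)
  · have hw1 : w ≠ 1 := by
      intro hw
      have := hinj 1 (by rw [hw]; simp)
      simp at this
    -- every conjugate of w is w or w⁻¹
    have hconj : ∀ c : FreeGroup α, c * w * c⁻¹ = w ∨ c * w * c⁻¹ = w⁻¹ := by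
      intro c
      obtain ⟨k, hk⟩ := hpow _ (Subgroup.Normal.conj_mem ‹G.Normal› w hwG c)
      obtain ⟨m, hm⟩ := hpow _ (Subgroup.Normal.conj_mem ‹G.Normal› w hwG c⁻¹)
      rw [inv_inv] at hm
      have hw' : w = w ^ (m * k) := by
        calc w = c⁻¹ * (c * w * c⁻¹) * c := by group
          _ = c⁻¹ * w ^ k * c := by rw [hk]
          _ = (c⁻¹ * w * c⁻¹⁻¹) ^ k := by rw [conj_zpow, inv_inv]
          _ = (w ^ m) ^ k := by rw [inv_inv, hm]
          _ = w ^ (m * k) := by rw [← zpow_mul, mul_comm]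
      have : w ^ (m * k - 1) = 1 := by
        rw [zpow_sub, ← hw', zpow_one, mul_inv_cancel]
      have hmk : m * k = 1 := by linarith [hinj _ this]
      have hku : IsUnit k := IsUnit.of_mul_eq_one (a := k) m (by rw [mul_comm]; exact hmk)
      rcases Int.isUnit_iff.1 hku with hk1 | hk1
      · left; rw [hk, hk1, zpow_one]
      · right; rw [hk, hk1]; simp
    -- hence w commutes with all squares
    have hsq : ∀ c : FreeGroup α, (c * c) * w = w * (c * c) := by
      intro c
      rcases hconj c with hc | hc
      · have : c * w = w * c := by
          calc c * w = (c * w * c⁻¹) * c := by group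
            _ = w * c := by rw [hc]
        calc (c * c) * w = c * (c * w) := by rw [mul_assoc]
          _ = c * (w * c) := by rw [this]
          _ = (c * w) * c := by rw [mul_assoc]
          _ = w * (c * c) := by rw [this, mul_assoc]
      · have hwinv : c * w⁻¹ * c⁻¹ = w := by
          rw [show c * w⁻¹ * c⁻¹ = (c * w * c⁻¹)⁻¹ by group, hc, inv_inv]
        calc (c * c) * w = c * (c * w * c⁻¹) * c := by group
          _ = c * w⁻¹ * c := by rw [hc]
          _ = (c * w⁻¹ * c⁻¹) * (c * c) := by group
          _ = w * (c * c) := by rw [hwinv]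
    -- let X, Y be the squares of the two generators
    set x := of a with hx
    set y := of b with hy
    have hXw : (x * x) * w = w * (x * x) := hsq x
    have hYw : (y * y) * w = w * (y * y) := hsq y
    obtain ⟨z1, ⟨p, hp⟩, ⟨q, hq⟩⟩ := commute_common_power hXw
    -- q ≠ 0 since w ≠ 1
    have hq0 : q ≠ 0 := by rintro rfl; simp at hq; exact hw1 hq
    -- (x*x)^q = w^p commutes with y*y
    have hXq : (x * x) ^ q = w ^ p := by rw [hp, hq, ← zpow_mul, ← zpow_mul, mul_comm]
    have hXqY : ((x * x) ^ q) * (y * y) = (y * y) * ((x * x) ^ q) := by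
      rw [hXq]
      have h1 : Commute (y * y) w := hYw
      exact (h1.zpow_right p).symm
    obtain ⟨z3, ⟨m, hm⟩, ⟨n, hn⟩⟩ := commute_common_power hXqY
    have hy1 : y * y ≠ 1 := by
      intro hyy
      have := congrArg (expSum b) hyy
      rw [(expSum b).map_mul, hy, expSum_of_self, (expSum b).map_one] at this
      simp [← ofAdd_add] at this
    have hn0 : n ≠ 0 := by rintro rfl; simp at hn; exact hy1 hn
    -- (x*x)^(q*n) = (y*y)^m : apply exponent sum at a
    have key : (x * x) ^ (q * n) = (y * y) ^ m := by
      rw [zpow_mul, hm, hn, ← zpow_mul, ← zpow_mul, mul_comm]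
    have := congrArg (expSum a) key
    rw [map_zpow, map_zpow, (expSum a).map_mul, (expSum a).map_mul, hx, hy,
      expSum_of_self, expSum_of_ne hab.symm] at this
    have h3 := congrArg Multiplicative.toAdd this
    rw [toAdd_zpow, toAdd_zpow, toAdd_mul, toAdd_mul, toAdd_ofAdd, toAdd_one] at h3
    have h2 : (q * n) * 2 = 0 := by
      simp only [smul_eq_mul] at h3
      linarith
    rcases mul_eq_zero.1 h2 with h | h
    · rcases mul_eq_zero.1 h with h | h
      · exact hq0 h
      · exact hn0 h
    · norm_num at h
end
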